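/- arXiv:1712.03620 — 7 statements merged into one kernel-verified Lean document; each statement's English description precedes it below -/
import Mathlib

section
/- For every positive integer t, there exists a positive integer J(t) such that for any partition of {1,...,J(t)} into t classes, there exist positive integers a and b (not necessarily distinct) such that a, b, and a+b all lie in the same class. -/
/-- Finite Ramsey theorem for triangles, with colors drawn from a finite set `C`
of size at most `t`. -/
theorem ramsey_triangle (t : ℕ) : ∃ n : ℕ, 0 < n ∧
    ∀ (f : ℕ → ℕ → ℕ) (C S : Finset ℕ), C.card ≤ t →
      (∀ x ∈ S, ∀ y ∈ S, x < y → f x y ∈ C) → n ≤ S.card →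
      ∃ i ∈ S, ∃ j ∈ S, ∃ k ∈ S, i < j ∧ j < k ∧ f i j = f j k ∧ f i j = f i k := by
  induction t with
  | zero =>
    refine ⟨2, by norm_num, fun f C S hC hf hS => ?_⟩
    have hCe : C = ∅ := Finset.card_eq_zero.mp (Nat.le_zero.mp hC)
    have h1 : 1 < S.card := hS
    obtain ⟨x, hx, y, hy, hxy⟩ := Finset.one_lt_card.mp h1
    rcases lt_or_gt_of_ne hxy with h | h
    · exact absurd (hf x hx y hy h) (by simp [hCe])
    · exact absurd (hf y hy x hx h) (by simp [hCe])
  | succ t ih =>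
    obtain ⟨n, hn, H⟩ := ih
    refine ⟨(t + 1) * n + 2, by positivity, fun f C S hC hf hS => ?_⟩
    have hS0 : S.Nonempty := Finset.card_pos.mp (by omega)
    set v := S.min' hS0 with hv
    have hvS : v ∈ S := S.min'_mem hS0
    have hvlt : ∀ x ∈ S, x ≠ v → v < x := fun x hx hne =>
      lt_of_le_of_ne (S.min'_le x hx) (Ne.symm hne)
    set S' := S.erase v with hS'
    have hS'card : (t + 1) * n < S'.card := by
      have : S'.card = S.card - 1 := by
        rw [hS']; exact Finset.card_erase_of_mem hvS
      omega
    have hmaps : ∀ x ∈ S', f v x ∈ C := by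
      intro x hx
      have hxS := Finset.mem_of_mem_erase hx
      exact hf v hvS x hxS (hvlt x hxS (Finset.ne_of_mem_erase hx))
    have hmul : C.card * n < S'.card :=
      lt_of_le_of_lt (Nat.mul_le_mul_right n hC) hS'card
    obtain ⟨i, hiC, hT⟩ :=
      Finset.exists_lt_card_fiber_of_mul_lt_card_of_maps_to hmaps hmul
    set T := S'.filter (fun x => f v x = i) with hTdef
    by_cases hcase : ∃ x ∈ T, ∃ y ∈ T, x < y ∧ f x y = i
    · obtain ⟨x, hx, y, hy, hxy, hfxy⟩ := hcase
      have hx' : x ∈ S' ∧ f v x = i := by simpa [hTdef] using hx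
      have hy' : y ∈ S' ∧ f v y = i := by simpa [hTdef] using hy
      have hxS : x ∈ S := Finset.mem_of_mem_erase hx'.1
      have hyS : y ∈ S := Finset.mem_of_mem_erase hy'.1
      exact ⟨v, hvS, x, hxS, y, hyS,
        hvlt x hxS (Finset.ne_of_mem_erase hx'.1), hxy,
        by rw [hx'.2, hfxy], by rw [hx'.2, hy'.2]⟩
    · push_neg at hcase
      have hTsub : ∀ x ∈ T, x ∈ S := fun x hx =>
        Finset.mem_of_mem_erase (Finset.mem_of_mem_filter x hx)
      have hC' : (C.erase i).card ≤ t := by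
        have := Finset.card_erase_of_mem hiC
        omega
      have hf' : ∀ x ∈ T, ∀ y ∈ T, x < y → f x y ∈ C.erase i := by
        intro x hx y hy hxy
        exact Finset.mem_erase.mpr ⟨hcase x hx y hy hxy, hf x (hTsub x hx) y (hTsub y hy) hxy⟩
      obtain ⟨a, ha, b, hb, c, hc, hab, hbc, h1, h2⟩ :=
        H f (C.erase i) T hC' hf' (le_of_lt hT)
      exact ⟨a, hTsub a ha, b, hTsub b hb, c, hTsub c hc, hab, hbc, h1, h2⟩

/-- Schur's theorem: for every positive integer `t` there is `J` such that every
`t`-coloring of `{1,...,J}` admits `a, b` with `a`, `b`, `a+b` the same color. -/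
theorem schur (t : ℕ) (ht : 0 < t) :
    ∃ J : ℕ, 0 < J ∧ ∀ c : ℕ → Fin t, ∃ a b : ℕ,
      0 < a ∧ 0 < b ∧ a ≤ J ∧ b ≤ J ∧ a + b ≤ J ∧
      c a = c b ∧ c a = c (a + b) := by
  obtain ⟨n, hn, H⟩ := ramsey_triangle t
  refine ⟨n, hn, fun c => ?_⟩
  obtain ⟨i, hi, j, hj, k, hk, hij, hjk, h1, h2⟩ :=
    H (fun x y => (c (y - x)).val) (Finset.range t) (Finset.range (n + 1))
      (by simp) (fun x _ y _ _ => Finset.mem_range.mpr (c (y - x)).isLt)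
      (by simp)
  have hi' := Finset.mem_range.mp hi
  have hk' := Finset.mem_range.mp hk
  refine ⟨j - i, k - j, by omega, by omega, by omega, by omega, ?_, ?_, ?_⟩
  · omega
  · exact Fin.val_injective (by simpa using h1)
  · have : j - i + (k - j) = k - i := by omega
    rw [this]
    exact Fin.val_injective (by simpa using h2)
end

section
/- For all positive integers t and n, there exists a positive integer J(t,n) such that for any partition of {1,...,J(t,n)} into t classes, there exist positive integers a_1,...,a_n (not necessarily distinct) and a class index ℓ such that for every nonempty subset I ⊆ {1,...,n}, the sum ∑_{i∈I} a_i belongs to class ℓ (in particular all these sums lie in {1,...,J(t,n)}). -/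
/-- Transfer `FS` membership back along a stream map by an additive hom. -/
lemma fs_map_rev {M N : Type*} [AddSemigroup M] [AddSemigroup N] (f : M → N)
    (hf : ∀ x y, f (x + y) = f x + f y) :
    ∀ {m : N} {b : Stream' N}, m ∈ Hindman.FS b →
      ∀ a : Stream' M, b = a.map f → ∃ p ∈ Hindman.FS a, f p = m := by
  intro m b hm
  induction hm with
  | head' b =>
    intro a hab
    exact ⟨a.head, Hindman.FS.head a, by rw [hab, Stream'.head_map]⟩
  | tail' b m h ih =>
    intro a hab
    obtain ⟨p, hp, hfp⟩ := ih a.tail (by rw [hab, Stream'.tail_map])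
    exact ⟨p, Hindman.FS.tail a p hp, hfp⟩
  | cons' b m h ih =>
    intro a hab
    obtain ⟨p, hp, hfp⟩ := ih a.tail (by rw [hab, Stream'.tail_map])
    exact ⟨a.head + p, Hindman.FS.cons a p hp, by
      rw [hf, hfp, hab, Stream'.head_map]⟩

/-- For a fixed coloring of ℕ, there exist `n` positive integers all of whose
nonempty subset sums are monochromatic. -/
lemma hindman_finite (t n : ℕ) (ht : 0 < t) (c : ℕ → Fin t) :
    ∃ (a : Fin n → ℕ) (ℓ : Fin t), (∀ i, 0 < a i) ∧
      ∀ I : Finset (Fin n), I.Nonempty → c (∑ i ∈ I, a i) = ℓ := by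
  -- apply Hindman's theorem in ℕ+
  obtain ⟨C, hCmem, b, hFS⟩ :=
    Hindman.exists_FS_of_finite_cover
      (Set.range fun ℓ : Fin t => {m : ℕ+ | c (m : ℕ) = ℓ})
      (Set.finite_range _)
      (by intro m _; exact ⟨_, ⟨c (m : ℕ), rfl⟩, rfl⟩)
  obtain ⟨ℓ, rfl⟩ := hCmem
  -- the ℕ-valued stream
  set bn : Stream' ℕ := b.map (fun x : ℕ+ => (x : ℕ)) with hbn
  refine ⟨fun i => bn.get (i : ℕ), ℓ, ?_, ?_⟩
  · intro i
    simp [hbn, Stream'.get_map]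
  · intro I hI
    have hsum : (∑ i ∈ I, bn.get (i : ℕ))
        = ∑ j ∈ I.map ⟨Fin.val, Fin.val_injective⟩, bn.get j := by
      rw [Finset.sum_map]; rfl
    have hmem : (∑ j ∈ I.map ⟨Fin.val, Fin.val_injective⟩, bn.get j) ∈ Hindman.FS bn :=
      Hindman.FS.finset_sum bn _ (by simpa using hI)
    rw [hsum]
    obtain ⟨p, hp, hfp⟩ := fs_map_rev (fun x : ℕ+ => (x : ℕ)) (fun x y => rfl) hmem b rfl
    rw [← hfp]
    exact hFS hp

/-- Finite sums generalization of Schur's theorem. -/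
theorem finite_sums (t n : ℕ) (ht : 0 < t) (hn : 0 < n) :
    ∃ J : ℕ, 0 < J ∧ ∀ c : ℕ → Fin t, ∃ (a : Fin n → ℕ) (ℓ : Fin t),
      (∀ i, 0 < a i) ∧
      ∀ I : Finset (Fin n), I.Nonempty →
        (∑ i ∈ I, a i) ≤ J ∧ c (∑ i ∈ I, a i) = ℓ := by
  by_contra hcon
  -- Good J c : the coloring c has a witness bounded by J
  set Good : ℕ → (ℕ → Fin t) → Prop := fun J c =>
    ∃ (a : Fin n → ℕ) (ℓ : Fin t), (∀ i, 0 < a i) ∧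
      ∀ I : Finset (Fin n), I.Nonempty →
        (∑ i ∈ I, a i) ≤ J ∧ c (∑ i ∈ I, a i) = ℓ with hGood
  -- the sets of colorings bad for J+1
  set V : ℕ → Set (ℕ → Fin t) := fun J => {c | ¬ Good (J + 1) c} with hV
  have hGoodOpen : ∀ J, IsOpen {c : ℕ → Fin t | Good J c} := by
    intro J
    have : {c : ℕ → Fin t | Good J c} =
        ⋃ (a : Fin n → ℕ) (ℓ : Fin t)
          (_ : (∀ i, 0 < a i) ∧ ∀ I : Finset (Fin n), I.Nonempty → (∑ i ∈ I, a i) ≤ J),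
          ⋂ (I : Finset (Fin n)), {c : ℕ → Fin t | I.Nonempty → c (∑ i ∈ I, a i) = ℓ} := by
      ext c
      constructor
      · rintro ⟨a, ℓ, hpos, hall⟩
        refine Set.mem_iUnion.2 ⟨a, Set.mem_iUnion.2 ⟨ℓ, Set.mem_iUnion.2
          ⟨⟨hpos, fun I hI => (hall I hI).1⟩, Set.mem_iInter.2 fun I hI => (hall I hI).2⟩⟩⟩
      · intro hc
        obtain ⟨a, hc⟩ := Set.mem_iUnion.1 hc
        obtain ⟨ℓ, hc⟩ := Set.mem_iUnion.1 hc
        obtain ⟨⟨hpos, hbd⟩, hc⟩ := Set.mem_iUnion.1 hc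
        exact ⟨a, ℓ, hpos, fun I hI => ⟨hbd I hI, Set.mem_iInter.1 hc I hI⟩⟩
    rw [this]
    refine isOpen_iUnion fun a => isOpen_iUnion fun ℓ => isOpen_iUnion fun _ =>
      isOpen_iInter_of_finite fun I => ?_
    by_cases hI : I.Nonempty
    · have : {c : ℕ → Fin t | I.Nonempty → c (∑ i ∈ I, a i) = ℓ}
          = (fun c : ℕ → Fin t => c (∑ i ∈ I, a i)) ⁻¹' {ℓ} := by
        ext c; simp [hI]
      rw [this]
      exact (continuous_apply _).isOpen_preimage _ (isOpen_discrete _)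
    · have : {c : ℕ → Fin t | I.Nonempty → c (∑ i ∈ I, a i) = ℓ} = Set.univ := by
        ext c; simp [hI]
      rw [this]
      exact isOpen_univ
  have hVclosed : ∀ J, IsClosed (V J) := fun J => (hGoodOpen (J + 1)).isClosed_compl
  have hVanti : ∀ J, V (J + 1) ⊆ V J := by
    intro J c hc
    intro hg
    obtain ⟨a, ℓ, hpos, hall⟩ := hg
    exact hc ⟨a, ℓ, hpos, fun I hI => ⟨(hall I hI).1.trans (Nat.le_succ _), (hall I hI).2⟩⟩
  have hVne : ∀ J, (V J).Nonempty := by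
    intro J
    rcases Set.eq_empty_or_nonempty (V J) with h | h
    · exfalso
      refine hcon ⟨J + 1, Nat.succ_pos _, fun c => ?_⟩
      by_contra hg
      have : c ∈ V J := hg
      rw [h] at this
      exact this
    · exact h
  have hVcompact : IsCompact (V 0) := (hVclosed 0).isCompact
  obtain ⟨c, hc⟩ := IsCompact.nonempty_iInter_of_sequence_nonempty_isCompact_isClosed
    V hVanti hVne hVcompact hVclosed
  have hcJ : ∀ J, ¬ Good (J + 1) c := fun J => (Set.mem_iInter.1 hc J)
  -- now use Hindman's theorem to contradict badness of c
  obtain ⟨a, ℓ, hpos, hmono⟩ := hindman_finite t n ht c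
  set J : ℕ := ∑ i : Fin n, a i with hJ
  apply hcJ J
  refine ⟨a, ℓ, hpos, fun I hI => ⟨?_, hmono I hI⟩⟩
  calc (∑ i ∈ I, a i) ≤ ∑ i : Fin n, a i :=
        Finset.sum_le_sum_of_subset (Finset.subset_univ I)
    _ ≤ J + 1 := Nat.le_succ_of_le le_rfl
end

section
/- For all positive integers t and n, there exists a positive integer J'(t,n) such that for any partition of {1,...,J'(t,n)} into t classes, there exist n pairwise distinct positive integers a_1,...,a_n and a class index ℓ such that for every nonempty subset I ⊆ {1,...,n}, ∑_{i∈I} a_i belongs to class ℓ. -/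
open Filter

/-- Image of an FS-set under an addition-preserving map: every element of
`FS (a.map f)` is `f` of an element of `FS a`. -/
lemma FS_map_surj {M N : Type*} [AddSemigroup M] [AddSemigroup N] (f : M → N)
    (hf : ∀ x y, f (x + y) = f x + f y) {b : Stream' N} {m : N} (h : m ∈ Hindman.FS b) :
    ∀ a : Stream' M, b = a.map f → ∃ m' ∈ Hindman.FS a, f m' = m := by
  induction h with
  | head' b =>
      rintro a rfl
      exact ⟨a.head, Hindman.FS.head a, (Stream'.head_map f a).symm⟩
  | tail' b m hm ih =>
      rintro a rfl
      obtain ⟨m', h1, h2⟩ := ih a.tail (Stream'.tail_map f a).symm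
      exact ⟨m', Hindman.FS.tail _ _ h1, h2⟩
  | cons' b m hm ih =>
      rintro a rfl
      obtain ⟨m', h1, h2⟩ := ih a.tail (Stream'.tail_map f a).symm
      exact ⟨a.head + m', Hindman.FS.cons _ _ h1, by rw [hf, Stream'.head_map, h2]⟩

/-- Start indices of blocks of rapidly growing length. -/
def blkAux (b : ℕ → ℕ) : ℕ → ℕ
  | 0 => 0
  | i + 1 => blkAux b i + (∑ j ∈ Finset.range (blkAux b i), b j) + 2

lemma blkAux_lt (b : ℕ → ℕ) (i : ℕ) : blkAux b i < blkAux b (i + 1) := by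
  simp only [blkAux]; omega

lemma blkAux_mono (b : ℕ → ℕ) : StrictMono (blkAux b) :=
  strictMono_nat_of_lt_succ (blkAux_lt b)

/-- Finite sums theorem with pairwise distinct terms. -/
theorem finite_sums_distinct (t n : ℕ) (ht : 0 < t) (hn : 0 < n) :
    ∃ J : ℕ, 0 < J ∧ ∀ c : ℕ → Fin t, ∃ (a : Fin n → ℕ) (ℓ : Fin t),
      (∀ i, 0 < a i) ∧ Function.Injective a ∧
      ∀ I : Finset (Fin n), I.Nonempty →
        (∑ i ∈ I, a i) ≤ J ∧ c (∑ i ∈ I, a i) = ℓ := by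
  by_contra hcon
  push_neg at hcon
  choose c hc using fun J : ℕ => hcon (J + 1) J.succ_pos
  -- the limit coloring along a free ultrafilter
  set U : Ultrafilter ℕ := Filter.hyperfilter ℕ with hU
  have hLex : ∀ x : ℕ, ∃ ℓ : Fin t, {J | c J x = ℓ} ∈ U := by
    intro x
    by_contra hno
    push_neg at hno
    have h1 : ∀ ℓ : Fin t, {J | c J x = ℓ}ᶜ ∈ U := fun ℓ =>
      Ultrafilter.compl_mem_iff_notMem.mpr (hno ℓ)
    have h2 : (⋂ ℓ : Fin t, {J | c J x = ℓ}ᶜ) ∈ U := Filter.iInter_mem.mpr h1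
    obtain ⟨J, hJ⟩ := Ultrafilter.nonempty_of_mem h2
    exact (Set.mem_iInter.mp hJ (c J x)) rfl
  choose L hL using hLex
  -- Hindman's theorem for the limit coloring, over ℕ+
  obtain ⟨cl, ⟨ℓ, rfl⟩, a, hFS⟩ :=
    Hindman.exists_FS_of_finite_cover
      (Set.range fun ℓ : Fin t => {x : ℕ+ | L (x : ℕ) = ℓ}) (Set.finite_range _)
      (fun x _ => ⟨_, ⟨L (x : ℕ), rfl⟩, rfl⟩)
  -- the induced stream of naturals
  set b : Stream' ℕ := a.map (fun x : ℕ+ => (x : ℕ)) with hb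
  have hbget : ∀ j, b.get j = (a.get j : ℕ) := fun j => by rw [hb]; exact Stream'.get_map _ j a
  have hbpos : ∀ j, 0 < b.get j := fun j => by rw [hbget]; exact (a.get j).pos
  have hmono : ∀ m ∈ Hindman.FS b, L m = ℓ := by
    intro m hm
    obtain ⟨m', hm', rfl⟩ := FS_map_surj _ (fun x y : ℕ+ => PNat.add_coe x y) hm a rfl
    exact hFS hm'
  -- block sums
  set s : ℕ → ℕ := blkAux b.get with hs
  set blk : ℕ → Finset ℕ := fun i => Finset.Ico (s i) (s (i + 1)) with hblk
  set v : ℕ → ℕ := fun i => ∑ j ∈ blk i, b.get j with hv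
  have hblk_card : ∀ i, (blk i).card = (∑ j ∈ Finset.range (s i), b.get j) + 2 := by
    intro i
    rw [hblk]
    simp only [Nat.card_Ico]
    have := blkAux_lt b.get i
    simp only [hs, blkAux]
    omega
  have hv_lb : ∀ i, (∑ j ∈ Finset.range (s i), b.get j) + 2 ≤ v i := by
    intro i
    calc (∑ j ∈ Finset.range (s i), b.get j) + 2 = ∑ _j ∈ blk i, 1 := by
          rw [Finset.sum_const, smul_eq_mul, mul_one, hblk_card]
      _ ≤ v i := Finset.sum_le_sum fun j _ => hbpos j
  have hv_mono : StrictMono v := by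
    intro i i' hii
    have hsub : blk i ⊆ Finset.range (s i') := by
      intro j hj
      rw [hblk] at hj
      simp only [Finset.mem_Ico] at hj
      rw [Finset.mem_range]
      exact lt_of_lt_of_le hj.2 (blkAux_mono b.get |>.monotone hii)
    calc v i ≤ ∑ j ∈ Finset.range (s i'), b.get j := Finset.sum_le_sum_of_subset hsub
      _ < (∑ j ∈ Finset.range (s i'), b.get j) + 2 := by omega
      _ ≤ v i' := hv_lb i'
  have hv_pos : ∀ i, 0 < v i := fun i => lt_of_lt_of_le (by omega) (hv_lb i)
  -- the candidate sequence
  set A : Fin n → ℕ := fun i => v (i : ℕ) with hA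
  have hApos : ∀ i, 0 < A i := fun i => hv_pos _
  have hAinj : Function.Injective A := fun i j hij =>
    Fin.ext (hv_mono.injective hij)
  -- subset sums lie in FS b
  have hdisj : ∀ I : Finset (Fin n), ((I : Set (Fin n))).PairwiseDisjoint
      (fun i : Fin n => blk (i : ℕ)) := by
    intro I i _ j _ hij
    have h : (i : ℕ) ≠ (j : ℕ) := fun h => hij (Fin.ext h)
    rcases h.lt_or_gt with h' | h'
    · apply Finset.disjoint_left.mpr
      intro x hx hx'
      rw [hblk] at hx hx'
      simp only [Finset.mem_Ico] at hx hx'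
      have : s ((i : ℕ) + 1) ≤ s (j : ℕ) := (blkAux_mono b.get).monotone h'
      omega
    · apply Finset.disjoint_left.mpr
      intro x hx hx'
      rw [hblk] at hx hx'
      simp only [Finset.mem_Ico] at hx hx'
      have : s ((j : ℕ) + 1) ≤ s (i : ℕ) := (blkAux_mono b.get).monotone h'
      omega
  have hsum_eq : ∀ I : Finset (Fin n),
      ∑ i ∈ I, A i = ∑ j ∈ I.biUnion (fun i : Fin n => blk (i : ℕ)), b.get j := by
    intro I
    rw [Finset.sum_biUnion (hdisj I)]
  have hsum_class : ∀ I : Finset (Fin n), I.Nonempty → L (∑ i ∈ I, A i) = ℓ := by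
    intro I hI
    obtain ⟨i, hi⟩ := hI
    have hne : (I.biUnion (fun i : Fin n => blk (i : ℕ))).Nonempty := by
      refine ⟨s (i : ℕ), Finset.mem_biUnion.mpr ⟨i, hi, ?_⟩⟩
      rw [hblk]
      simp only [Finset.mem_Ico]
      exact ⟨le_refl _, blkAux_lt b.get _⟩
    rw [hsum_eq I]
    exact hmono _ (Hindman.FS.finset_sum b _ hne)
  -- pick a good J along the ultrafilter
  set S : ℕ := ∑ i : Fin n, A i with hS
  have hE : (⋂ I : Finset (Fin n),
      {J | c J (∑ i ∈ I, A i) = L (∑ i ∈ I, A i)}) ∈ U :=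
    Filter.iInter_mem.mpr fun I => hL _
  have hbig : {J : ℕ | S ≤ J + 1} ∈ U := by
    apply Filter.hyperfilter_le_cofinite
    rw [Filter.mem_cofinite]
    apply Set.Finite.subset (Set.finite_Iio S)
    intro J hJ
    simp only [Set.mem_compl_iff, Set.mem_setOf_eq, not_le] at hJ
    simpa [Set.mem_Iio] using by omega
  obtain ⟨J, hJ1, hJ2⟩ := Ultrafilter.nonempty_of_mem (Filter.inter_mem hE hbig)
  obtain ⟨I, hIne, hIbad⟩ := hc J A ℓ hApos hAinj
  have hle : ∑ i ∈ I, A i ≤ J + 1 :=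
    le_trans (Finset.sum_le_sum_of_subset (Finset.subset_univ I)) hJ2
  exact hIbad hle ((Set.mem_iInter.mp hJ1 I).trans (hsum_class I hIne))
end

section
/- Given positive integers k, r, t with k ≥ r, there exists a positive integer N(k,r,t) such that: if S is a finite set with |S| ≥ N(k,r,t) and all nonempty subsets of S are divided into t classes A_1,...,A_t, then there exists a k-element subset K ⊆ S and a sequence of indices i_1,...,i_r ∈ {1,...,t} such that for each j = 1,...,r, every j-element subset of K belongs to A_{i_j}. -/
open Finset

/-- Finite hypergraph Ramsey theorem: for every uniformity `m` and target size `k`,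
there is `N` such that any `t`-coloring of subsets of a set of size `≥ N` admits a
`k`-set whose `m`-subsets are monochromatic. -/
lemma ramsey_level (t : ℕ) : ∀ m k : ℕ, ∃ N : ℕ, ∀ S : Finset ℕ, N ≤ S.card →
    ∀ c : Finset ℕ → Fin t, ∃ K : Finset ℕ, K ⊆ S ∧ K.card = k ∧
      ∃ i : Fin t, ∀ B : Finset ℕ, B ⊆ K → B.card = m → c B = i := by
  intro m
  induction m with
  | zero =>
    intro k
    refine ⟨k, fun S hS c => ?_⟩
    obtain ⟨K, hKS, hKcard⟩ := exists_subset_card_eq hS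
    refine ⟨K, hKS, hKcard, c ∅, fun B _ hB => ?_⟩
    rw [Finset.card_eq_zero.mp hB]
  | succ m IH =>
    -- First: end-homogeneous sets of any size `n`.
    have EH : ∀ n : ℕ, ∃ N : ℕ, ∀ S : Finset ℕ, N ≤ S.card →
        ∀ c : Finset ℕ → Fin t, ∃ (K : Finset ℕ) (f : ℕ → Fin t), K ⊆ S ∧ K.card = n ∧
          ∀ B : Finset ℕ, B ⊆ K → B.card = m + 1 → ∀ hne : B.Nonempty,
            c B = f (B.min' hne) := by
      intro n
      induction n with
      | zero =>
        refine ⟨0, fun S _ c => ⟨∅, fun _ => c ∅, empty_subset _, card_empty, ?_⟩⟩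
        intro B hB hBc _
        have : B = ∅ := subset_empty.mp hB
        simp [this] at hBc
      | succ n IHn =>
        obtain ⟨NE, hNE⟩ := IHn
        obtain ⟨NR, hNR⟩ := IH NE
        refine ⟨NR + 1, fun S hS c => ?_⟩
        have hSne : S.Nonempty := card_pos.mp (by omega)
        set a := S.min' hSne with ha
        have haS : a ∈ S := S.min'_mem hSne
        set S₁ := S.erase a with hS₁
        have hS₁card : NR ≤ S₁.card := by
          rw [hS₁, card_erase_of_mem haS]; omega
        obtain ⟨H, hHS₁, hHcard, i, hmono⟩ :=
          hNR S₁ hS₁card (fun B => c (insert a B))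
        obtain ⟨K', f', hK'H, hK'card, hEH⟩ := hNE H (le_of_eq hHcard.symm) c
        have haK' : a ∉ K' := fun h => (mem_erase.mp (hHS₁ (hK'H h))).1 rfl
        refine ⟨insert a K', fun x => if x = a then i else f' x, ?_, ?_, ?_⟩
        · intro x hx
          rcases mem_insert.mp hx with rfl | hx
          · exact haS
          · exact (erase_subset a S) (hHS₁ (hK'H hx))
        · rw [card_insert_of_notMem haK', hK'card]
        · intro B hB hBc hne
          by_cases haB : a ∈ B
          · have hmin : B.min' hne = a := by
              apply le_antisymm (min'_le _ _ haB)
              apply le_min'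
              intro y hy
              rcases mem_insert.mp (hB hy) with rfl | hy'
              · exact le_rfl
              · exact S.min'_le y ((erase_subset a S) (hHS₁ (hK'H hy')))
            rw [hmin]
            simp only [if_pos rfl]
            have hBe : B.erase a ⊆ H := by
              intro x hx
              have hx' := mem_erase.mp hx
              rcases mem_insert.mp (hB hx'.2) with rfl | h
              · exact absurd rfl hx'.1
              · exact hK'H h
            have hBec : (B.erase a).card = m := by
              rw [card_erase_of_mem haB, hBc]; omega
            have := hmono (B.erase a) hBe hBec
            rwa [insert_erase haB] at this
          · have hBK' : B ⊆ K' := fun x hx =>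
              (mem_insert.mp (hB hx)).resolve_left (fun h => haB (h ▸ hx))
            have hminK' : B.min' hne ∈ K' := hBK' (B.min'_mem hne)
            have hmina : B.min' hne ≠ a := fun h => haK' (h ▸ hminK')
            rw [hEH B hBK' hBc hne]
            simp [if_neg hmina]
    -- Now extract a monochromatic set via pigeonhole.
    intro k
    obtain ⟨NE, hNE⟩ := EH (t * k + 1)
    refine ⟨NE, fun S hS c => ?_⟩
    obtain ⟨K₀, f, hK₀S, hK₀card, hEH⟩ := hNE S hS c
    have hpig : (Finset.univ : Finset (Fin t)).card * (k - 1) < K₀.card := by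
      rw [hK₀card, card_univ, Fintype.card_fin]
      have : t * (k - 1) ≤ t * k := Nat.mul_le_mul_left t (Nat.sub_le k 1)
      omega
    obtain ⟨i, _, hi⟩ := exists_lt_card_fiber_of_mul_lt_card_of_maps_to
      (fun a _ => mem_univ (f a)) hpig
    have hk' : k ≤ ({x ∈ K₀ | f x = i}).card := by omega
    obtain ⟨K, hKfil, hKcard⟩ := exists_subset_card_eq hk'
    have hKK₀ : K ⊆ K₀ := hKfil.trans (filter_subset _ _)
    refine ⟨K, hKK₀.trans hK₀S, hKcard, i, fun B hBK hBc => ?_⟩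
    have hne : B.Nonempty := card_pos.mp (by omega)
    rw [hEH B (hBK.trans hKK₀) hBc hne]
    exact (mem_filter.mp (hKfil (hBK (B.min'_mem hne)))).2

/-- Iterated version: monochromatic simultaneously at all levels `1, …, r`. -/
lemma iterated_ramsey_aux (t : ℕ) : ∀ r k : ℕ, ∃ N : ℕ, ∀ S : Finset ℕ, N ≤ S.card →
    ∀ c : Finset ℕ → Fin t, ∃ K : Finset ℕ, K ⊆ S ∧ K.card = k ∧
      ∀ j : ℕ, j < r → ∃ i : Fin t, ∀ B : Finset ℕ, B ⊆ K → B.card = j + 1 → c B = i := by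
  intro r
  induction r with
  | zero =>
    intro k
    refine ⟨k, fun S hS c => ?_⟩
    obtain ⟨K, hKS, hKcard⟩ := exists_subset_card_eq hS
    exact ⟨K, hKS, hKcard, fun j hj => absurd hj (Nat.not_lt_zero j)⟩
  | succ r IH =>
    intro k
    obtain ⟨NI, hNI⟩ := IH k
    obtain ⟨NR, hNR⟩ := ramsey_level t (r + 1) NI
    refine ⟨NR, fun S hS c => ?_⟩
    obtain ⟨K₁, hK₁S, hK₁card, iR, hiR⟩ := hNR S hS c
    obtain ⟨K, hKK₁, hKcard, hmono⟩ := hNI K₁ (le_of_eq hK₁card.symm) c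
    refine ⟨K, hKK₁.trans hK₁S, hKcard, fun j hj => ?_⟩
    rcases Nat.lt_succ_iff_lt_or_eq.mp hj with hj' | rfl
    · exact hmono j hj'
    · exact ⟨iR, fun B hB hBc => hiR B (hB.trans hKK₁) hBc⟩

/-- Iterated Ramsey theorem. -/
theorem iterated_ramsey (k r t : ℕ) (hk : 0 < k) (hr : 0 < r) (ht : 0 < t)
    (hrk : r ≤ k) :
    ∃ N : ℕ, 0 < N ∧ ∀ S : Finset ℕ, N ≤ S.card →
      ∀ c : Finset ℕ → Fin t, ∃ K : Finset ℕ, K ⊆ S ∧ K.card = k ∧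
        ∃ idx : Fin r → Fin t, ∀ j : Fin r, ∀ B : Finset ℕ,
          B ⊆ K → B.card = (j : ℕ) + 1 → c B = idx j := by
  obtain ⟨N, hN⟩ := iterated_ramsey_aux t r k
  refine ⟨max N 1, by omega, fun S hS c => ?_⟩
  obtain ⟨K, hKS, hKcard, hmono⟩ := hN S (le_trans (le_max_left _ _) hS) c
  refine ⟨K, hKS, hKcard, ?_⟩
  choose g hg using hmono
  exact ⟨fun j => g j j.isLt, fun j B hB hBc => hg j j.isLt B hB hBc⟩
end

section
/- Let f be the alternating-sum function: for a nonempty finite set B of positive integers with elements b_1 < ... < b_k, f(B) = ∑ (-1)^j b_j if k is even and ∑ (-1)^{j+1} b_j if k is odd. Suppose P ⊆ A is a consecutive subset of A of even cardinality (i.e., if a ∈ A and x < a < y for some x, y ∈ P, then a ∈ P), P ≠ A, and the number of elements of A greater than max P is odd. Then f(A) = f(A \ P) − f(P). -/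
/-- Alternating sum of a list: `a - (b - (c - ...))`. -/
def altList : List ℕ → ℤ
  | [] => 0
  | a :: l => (a : ℤ) - altList l

/-- Alternating sum of a finite set, signed so the largest element gets `+`. -/
def altSum (B : Finset ℕ) : ℤ := altList ((B.sort (· ≤ ·)).reverse)

lemma altList_append (X Y : List ℕ) :
    altList (X ++ Y) = altList X + (-1 : ℤ)^X.length * altList Y := by
  induction X with
  | nil => simp [altList]
  | cons a l ih =>
    simp only [List.cons_append, altList, ih, List.length_cons, pow_succ, List.append_eq]
    ring

lemma sort_split (L R : Finset ℕ) (h : Disjoint L R)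
    (hle : ∀ x ∈ L, ∀ y ∈ R, x ≤ y) :
    (L ∪ R).sort (· ≤ ·) = L.sort (· ≤ ·) ++ R.sort (· ≤ ·) := by
  refine (fun hp h1 h2 => List.Perm.eq_of_pairwise' (r := (· ≤ ·)) h1 h2 hp) ?_ ?_ ?_
  · rw [← Multiset.coe_eq_coe, ← Multiset.coe_add, Finset.sort_eq, Finset.sort_eq,
      Finset.sort_eq, ← Finset.disjUnion_eq_union _ _ h]
    rfl
  · exact Finset.pairwise_sort _ _
  · rw [List.pairwise_append]
    refine ⟨Finset.pairwise_sort _ _, Finset.pairwise_sort _ _, ?_⟩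
    intro x hx y hy
    exact hle x (by simpa using (Finset.mem_sort _).mp hx) y
      (by simpa using (Finset.mem_sort _).mp hy)

/-- F2: removing a consecutive even block with an odd number of larger elements. -/
theorem altSum_sdiff (A P : Finset ℕ) (hPA : P ⊆ A) (hP : P.Nonempty)
    (hApos : ∀ a ∈ A, 0 < a) (hPe : Even P.card) (hPne : P ≠ A)
    (hcons : ∀ a ∈ A, ∀ x ∈ P, ∀ y ∈ P, x < a → a < y → a ∈ P)
    (hodd : Odd ((A.filter (fun a => P.max' hP < a)).card)) :
    altSum A = altSum (A \ P) - altSum P := by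
  set m := P.max' hP with hm
  set n := P.min' hP with hn
  set L := A.filter (· < n) with hL
  set R := A.filter (fun a => m < a) with hR
  have hnm : n ≤ m := P.min'_le m (P.max'_mem hP)
  have hPchar : ∀ a, a ∈ P ↔ a ∈ A ∧ n ≤ a ∧ a ≤ m := by
    intro a
    constructor
    · intro ha
      exact ⟨hPA ha, P.min'_le a ha, P.le_max' a ha⟩
    · rintro ⟨haA, h1, h2⟩
      rcases eq_or_lt_of_le h1 with h1 | h1
      · exact h1 ▸ P.min'_mem hP
      rcases eq_or_lt_of_le h2 with h2 | h2
      · exact h2 ▸ P.max'_mem hP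
      exact hcons a haA n (P.min'_mem hP) m (P.max'_mem hP) h1 h2
  have hmemL : ∀ a, a ∈ L ↔ a ∈ A ∧ a < n := by simp [hL]
  have hmemR : ∀ a, a ∈ R ↔ a ∈ A ∧ m < a := by simp [hR]
  have hdLP : Disjoint L P := by
    rw [Finset.disjoint_left]; intro a haL haP
    have := (hPchar a).mp haP
    have := (hmemL a).mp haL
    omega
  have hdLR : Disjoint L R := by
    rw [Finset.disjoint_left]; intro a haL haR
    have := (hmemR a).mp haR
    have := (hmemL a).mp haL
    omega
  have hdPR : Disjoint P R := by
    rw [Finset.disjoint_left]; intro a haP haR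
    have := (hPchar a).mp haP
    have := (hmemR a).mp haR
    omega
  have hdLPR : Disjoint (L ∪ P) R := by
    rw [Finset.disjoint_union_left]; exact ⟨hdLR, hdPR⟩
  have hA : A = (L ∪ P) ∪ R := by
    ext a
    simp only [Finset.mem_union, hmemL, hmemR, hPchar]
    constructor
    · intro ha
      by_cases h1 : a < n
      · exact Or.inl (Or.inl ⟨ha, h1⟩)
      by_cases h2 : m < a
      · exact Or.inr ⟨ha, h2⟩
      exact Or.inl (Or.inr ⟨ha, by omega, by omega⟩)
    · rintro ((⟨h, _⟩ | ⟨h, _⟩) | ⟨h, _⟩) <;> exact h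
  have hAP : A \ P = L ∪ R := by
    ext a
    simp only [Finset.mem_sdiff, Finset.mem_union, hmemL, hmemR, hPchar]
    by_cases h : a ∈ A <;> simp [h] <;> omega
  have hsortA : A.sort (· ≤ ·) =
      L.sort (· ≤ ·) ++ P.sort (· ≤ ·) ++ R.sort (· ≤ ·) := by
    rw [hA, sort_split _ _ hdLPR, sort_split _ _ hdLP]
    · intro x hx y hy
      have := (hmemL x).mp hx
      have := (hPchar y).mp hy
      omega
    · intro x hx y hy
      rw [Finset.mem_union] at hx
      have hy' := (hmemR y).mp hy
      rcases hx with hx | hx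
      · have := (hmemL x).mp hx; omega
      · have := (hPchar x).mp hx; omega
  have hsortAP : (A \ P).sort (· ≤ ·) = L.sort (· ≤ ·) ++ R.sort (· ≤ ·) := by
    rw [hAP, sort_split _ _ hdLR]
    intro x hx y hy
    have := (hmemL x).mp hx
    have := (hmemR y).mp hy
    omega
  have hRcard : Odd R.card := hodd
  have hRlen : ((R.sort (· ≤ ·)).reverse).length = R.card := by
    simp [Finset.length_sort]
  have hPlen : ((P.sort (· ≤ ·)).reverse).length = P.card := by
    simp [Finset.length_sort]
  have hpowR : (-1 : ℤ) ^ ((R.sort (· ≤ ·)).reverse).length = -1 := by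
    rw [hRlen]; exact Odd.neg_one_pow hRcard
  have hpowP : (-1 : ℤ) ^ ((P.sort (· ≤ ·)).reverse).length = 1 := by
    rw [hPlen]; exact Even.neg_one_pow hPe
  rw [altSum, altSum, altSum, hsortA, hsortAP]
  simp only [List.reverse_append, altList_append]
  rw [hpowR, hpowP]
  ring
end

section
/- There exists a 2-coloring of the nonempty finite subsets of the natural numbers such that there is no infinite set K ⊆ ℕ with the property that for every k ≥ 1, all k-element subsets of K have the same color. Specifically, coloring a finite set S with color 1 if |S| ∈ S and color 2 otherwise has this property. -/
/-- Counterexample to the infinite iterated Ramsey lemma: the coloring by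
`|S| ∈ S` admits no infinite set all of whose `k`-subsets are monochromatic
for every `k ≥ 1`. -/
theorem no_infinite_iterated_ramsey :
    ∃ c : Finset ℕ → Fin 2,
      (∀ S : Finset ℕ, c S = 0 ↔ S.card ∈ S) ∧
      ¬ ∃ K : Set ℕ, K.Infinite ∧
        ∀ k : ℕ, 1 ≤ k → ∃ ℓ : Fin 2, ∀ S : Finset ℕ,
          ↑S ⊆ K → S.card = k → c S = ℓ := by
  refine ⟨fun S => if S.card ∈ S then 0 else 1, fun S => ?_, ?_⟩
  · by_cases h : S.card ∈ S <;> simp [h]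
  · rintro ⟨K, hK, hmono⟩
    obtain ⟨k, hkK, hk0⟩ := hK.exists_gt 0
    have hK' : (K \ {k}).Infinite := hK.diff (Set.finite_singleton k)
    obtain ⟨t, ht, htc⟩ := hK'.exists_subset_card_eq (k - 1)
    obtain ⟨T, hT, hTc⟩ := hK'.exists_subset_card_eq k
    have hkt : k ∉ t := fun h => (ht h).2 rfl
    have hS : (insert k t).card = k := by
      rw [Finset.card_insert_of_notMem hkt, htc]; omega
    obtain ⟨ℓ, hℓ⟩ := hmono k hk0
    have h1 : ℓ = 0 := by
      rw [← hℓ (insert k t) ?_ hS]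
      · simp [hS]
      · intro x hx
        simp only [Finset.coe_insert, Set.mem_insert_iff] at hx
        rcases hx with rfl | hx
        · exact hkK
        · exact (ht hx).1
    have h2 : ℓ = 1 := by
      rw [← hℓ T (fun x hx => (hT hx).1) hTc]
      have : k ∉ T := fun h => (hT h).2 rfl
      simp [hTc, this]
    simp [h1] at h2
end

section
/- For every 2-coloring of the positive integers {1,...,N} with N sufficiently large, there exist positive integers a_1, a_2, a_3 (not necessarily distinct) and a color ℓ such that all seven sums a_1, a_2, a_3, a_1+a_2, a_1+a_3, a_2+a_3, a_1+a_2+a_3 have color ℓ. -/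
open Hindman Stream'

theorem fin2_cases (x : Fin 2) : x = 0 ∨ x = 1 := by omega

theorem per_coloring (c : ℕ+ → Fin 2) : ∃ a₁ a₂ a₃ : ℕ+, ∃ ℓ : Fin 2,
    c a₁ = ℓ ∧ c a₂ = ℓ ∧ c a₃ = ℓ ∧ c (a₁ + a₂) = ℓ ∧ c (a₁ + a₃) = ℓ ∧
    c (a₂ + a₃) = ℓ ∧ c (a₁ + a₂ + a₃) = ℓ := by
  obtain ⟨s, hs, b, hb⟩ := Hindman.exists_FS_of_finite_cover
      ({{n | c n = 0}, {n | c n = 1}} : Set (Set ℕ+))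
      (Set.Finite.insert _ (Set.finite_singleton _))
      (by
        rintro n -
        rcases fin2_cases (c n) with h | h
        · exact Set.mem_sUnion.mpr ⟨_, Or.inl rfl, h⟩
        · exact Set.mem_sUnion.mpr ⟨_, Or.inr rfl, h⟩)
  -- determine ℓ
  obtain ⟨ℓ, hℓ⟩ : ∃ ℓ : Fin 2, s = {n | c n = ℓ} := by
    rcases hs with h | h
    · exact ⟨0, h⟩
    · exact ⟨1, h⟩
  subst hℓ
  refine ⟨b.head, b.tail.head, b.tail.tail.head, ℓ, ?_, ?_, ?_, ?_, ?_, ?_, ?_⟩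
  · exact hb (FS.head b)
  · exact hb (FS.tail _ _ (FS.head _))
  · exact hb (FS.tail _ _ (FS.tail _ _ (FS.head _)))
  · exact hb (FS.cons _ _ (FS.head _))
  · exact hb (FS.cons _ _ (FS.tail _ _ (FS.head _)))
  · exact hb (FS.tail _ _ (FS.cons _ _ (FS.head _)))
  · have : b.head + b.tail.head + b.tail.tail.head
        = b.head + (b.tail.head + b.tail.tail.head) := by ring
    rw [this]
    exact hb (FS.cons _ _ (FS.cons _ _ (FS.head _)))

open Filter in
/-- The case `t = 2`, `n = 3` of the finite sums theorem. -/
theorem finite_sums_two_three :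
    ∃ N : ℕ, 0 < N ∧ ∀ c : ℕ → Fin 2, ∃ a₁ a₂ a₃ : ℕ,
      0 < a₁ ∧ 0 < a₂ ∧ 0 < a₃ ∧ ∃ ℓ : Fin 2,
      a₁ ≤ N ∧ a₂ ≤ N ∧ a₃ ≤ N ∧ a₁ + a₂ ≤ N ∧ a₁ + a₃ ≤ N ∧
      a₂ + a₃ ≤ N ∧ a₁ + a₂ + a₃ ≤ N ∧
      c a₁ = ℓ ∧ c a₂ = ℓ ∧ c a₃ = ℓ ∧ c (a₁ + a₂) = ℓ ∧ c (a₁ + a₃) = ℓ ∧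
      c (a₂ + a₃) = ℓ ∧ c (a₁ + a₂ + a₃) = ℓ := by
  classical
  by_contra hcon
  push_neg at hcon
  have h : ∀ N : ℕ, ∃ d : ℕ → Fin 2, ∀ a₁ a₂ a₃ : ℕ,
      0 < a₁ → 0 < a₂ → 0 < a₃ → ∀ ℓ : Fin 2,
      a₁ ≤ N → a₂ ≤ N → a₃ ≤ N → a₁ + a₂ ≤ N → a₁ + a₃ ≤ N →
      a₂ + a₃ ≤ N → a₁ + a₂ + a₃ ≤ N →
      ¬(d a₁ = ℓ ∧ d a₂ = ℓ ∧ d a₃ = ℓ ∧ d (a₁ + a₂) = ℓ ∧ d (a₁ + a₃) = ℓ ∧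
        d (a₂ + a₃) = ℓ ∧ d (a₁ + a₂ + a₃) = ℓ) := by
    intro N
    rcases Nat.eq_zero_or_pos N with rfl | hN
    · exact ⟨fun _ => 0, fun a₁ a₂ a₃ h₁ _ _ _ hle _ _ _ _ _ _ => by omega⟩
    · obtain ⟨d, hd⟩ := hcon N hN
      refine ⟨d, fun a₁ a₂ a₃ h₁ h₂ h₃ ℓ b₁ b₂ b₃ b₄ b₅ b₆ b₇ hc => ?_⟩
      obtain ⟨c₁, c₂, c₃, c₄, c₅, c₆, c₇⟩ := hc
      exact hd a₁ a₂ a₃ h₁ h₂ h₃ ℓ b₁ b₂ b₃ b₄ b₅ b₆ b₇ c₁ c₂ c₃ c₄ c₅ c₆ c₇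
  choose d hd using h
  set U : Ultrafilter ℕ := Filter.hyperfilter ℕ with hU
  set c : ℕ → Fin 2 := fun n => if {N | d N n = 0} ∈ U then 0 else 1 with hc
  have hagree : ∀ n : ℕ, {N | d N n = c n} ∈ U := by
    intro n
    by_cases hn : {N | d N n = 0} ∈ U
    · simp only [hc, if_pos hn]
      exact hn
    · have h1 : {N | d N n = 0}ᶜ ∈ U := Ultrafilter.compl_mem_iff_notMem.mpr hn
      have : {N | d N n = 0}ᶜ ⊆ {N | d N n = c n} := by
        intro N hN
        simp only [Set.mem_compl_iff, Set.mem_setOf_eq] at hN ⊢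
        simp only [hc, hn, if_false]
        rcases fin2_cases (d N n) with h | h
        · exact absurd h hN
        · exact h
      exact U.toFilter.mem_of_superset h1 this
  obtain ⟨a₁, a₂, a₃, ℓ, e₁, e₂, e₃, e₄, e₅, e₆, e₇⟩ :=
    per_coloring (fun n : ℕ+ => c n)
  have hA : {N | d N a₁ = c a₁} ∩ ({N | d N a₂ = c a₂} ∩ ({N | d N a₃ = c a₃} ∩
      ({N | d N (a₁+a₂) = c (a₁+a₂)} ∩ ({N | d N (a₁+a₃) = c (a₁+a₃)} ∩
      ({N | d N (a₂+a₃) = c (a₂+a₃)} ∩ {N | d N (a₁+a₂+a₃) = c (a₁+a₂+a₃)}))))) ∈ U := by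
    refine Filter.inter_mem (hagree _) (Filter.inter_mem (hagree _) (Filter.inter_mem (hagree _)
      (Filter.inter_mem (hagree _) (Filter.inter_mem (hagree _)
      (Filter.inter_mem (hagree _) (hagree _))))))
  have hinf : Set.Infinite _ := fun hfin => Filter.notMem_hyperfilter_of_finite hfin hA
  obtain ⟨N, hNmem, hNge⟩ := hinf.exists_gt ((a₁ : ℕ) + a₂ + a₃)
  obtain ⟨g₁, g₂, g₃, g₄, g₅, g₆, g₇⟩ := hNmem
  have p₁ : (0:ℕ) < a₁ := a₁.pos
  have p₂ : (0:ℕ) < a₂ := a₂.pos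
  have p₃ : (0:ℕ) < a₃ := a₃.pos
  refine hd N a₁ a₂ a₃ p₁ p₂ p₃ ℓ (by omega) (by omega) (by omega) (by omega) (by omega)
      (by omega) (by omega) ?_
  have q₄ : ((a₁ + a₂ : ℕ+) : ℕ) = (a₁ : ℕ) + a₂ := by push_cast; ring
  have q₅ : ((a₁ + a₃ : ℕ+) : ℕ) = (a₁ : ℕ) + a₃ := by push_cast; ring
  have q₆ : ((a₂ + a₃ : ℕ+) : ℕ) = (a₂ : ℕ) + a₃ := by push_cast; ring
  have q₇ : ((a₁ + a₂ + a₃ : ℕ+) : ℕ) = (a₁ : ℕ) + a₂ + a₃ := by push_cast; ring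
  rw [q₄] at e₄; rw [q₅] at e₅; rw [q₆] at e₆; rw [q₇] at e₇
  exact ⟨g₁.trans e₁, g₂.trans e₂, g₃.trans e₃, g₄.trans e₄, g₅.trans e₅,
    g₆.trans e₆, g₇.trans e₇⟩
end
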